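/- arXiv:2512.05612 — 4 statements merged into one kernel-verified Lean document; each statement's English description precedes it below -/
import Mathlib

section
/- Let μ be a finite positive measure on ℝⁿ satisfying the Carleman condition and let f ∈ L²(μ) with f ≥ 0 μ-a.e. Then the measure ν with dν = f dμ satisfies the Carleman condition; in particular, for each coordinate i, ∫ x_i^{2k} f dμ ≤ ‖f‖_{L²(μ)} (∫ x_i^{4k} dμ)^{1/2} < ∞ for all k. -/
open MeasureTheory
open ENNReal

lemma ennrpow_anti {a b : ℝ≥0∞} {r : ℝ} (h : a ≤ b) (hr : r ≤ 0) : b ^ r ≤ a ^ r := by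
  have ha : a ^ r = (a ^ (-r))⁻¹ := by rw [← ENNReal.rpow_neg, neg_neg]
  have hb : b ^ r = (b ^ (-r))⁻¹ := by rw [← ENNReal.rpow_neg, neg_neg]
  rw [ha, hb]
  exact ENNReal.inv_le_inv.mpr (ENNReal.rpow_le_rpow h (by linarith : (0:ℝ) ≤ -r))

lemma pow_le_one_add_pow {t : ℝ} {j j' : ℕ} (h : j ≤ j') :
    t ^ (2 * j) ≤ 1 + t ^ (2 * j') := by
  have h1 : t ^ (2 * j) = |t| ^ (2 * j) := (even_two_mul j).pow_abs t |>.symm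
  have h2 : t ^ (2 * j') = |t| ^ (2 * j') := (even_two_mul j').pow_abs t |>.symm
  rcases le_or_gt |t| 1 with ht | ht
  · have := pow_le_one₀ (abs_nonneg t) ht (n := 2 * j)
    nlinarith [pow_nonneg (abs_nonneg t) (2 * j')]
  · have := pow_le_pow_right₀ ht.le (by omega : 2 * j ≤ 2 * j')
    nlinarith [pow_nonneg (abs_nonneg t) (2 * j')]

lemma meas_momfun {n : ℕ} (i : Fin n) (p : ℕ) :
    Measurable fun x : Fin n → ℝ => ENNReal.ofReal ((x i) ^ p) :=
  ENNReal.measurable_ofReal.comp ((measurable_pi_apply i).pow_const p)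

lemma carleman_exp_neg (k : ℕ) : -1 / (2 * ((k : ℝ) + 1)) < 0 := by
  apply div_neg_of_neg_of_pos <;> [norm_num; positivity]

lemma mom_mono {n : ℕ} (μ : Measure (Fin n → ℝ)) [IsFiniteMeasure μ] (i : Fin n)
    {j j' : ℕ} (h : j ≤ j') :
    (∫⁻ x, ENNReal.ofReal ((x i) ^ (2 * j)) ∂μ) ≤
      μ Set.univ + ∫⁻ x, ENNReal.ofReal ((x i) ^ (2 * j')) ∂μ := by
  have : ∀ x : Fin n → ℝ, ENNReal.ofReal ((x i) ^ (2 * j)) ≤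
      1 + ENNReal.ofReal ((x i) ^ (2 * j')) := by
    intro x
    calc ENNReal.ofReal ((x i) ^ (2 * j)) ≤ ENNReal.ofReal (1 + (x i) ^ (2 * j')) :=
          ENNReal.ofReal_le_ofReal (pow_le_one_add_pow h)
    _ = 1 + ENNReal.ofReal ((x i) ^ (2 * j')) := by
          rw [ENNReal.ofReal_add zero_le_one ((even_two_mul j').pow_nonneg (x i)), ENNReal.ofReal_one]
  calc (∫⁻ x, ENNReal.ofReal ((x i) ^ (2 * j)) ∂μ)
      ≤ ∫⁻ x, (1 + ENNReal.ofReal ((x i) ^ (2 * j'))) ∂μ := lintegral_mono this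
    _ = μ Set.univ + ∫⁻ x, ENNReal.ofReal ((x i) ^ (2 * j')) ∂μ := by
        rw [lintegral_add_left measurable_const, lintegral_one]

lemma ae_coord_zero {n : ℕ} {μ : Measure (Fin n → ℝ)} {i : Fin n} {m : ℕ}
    (hm : (∫⁻ x, ENNReal.ofReal ((x i) ^ (2 * (m + 1))) ∂μ) = 0) :
    ∀ᵐ x ∂μ, x i = 0 := by
  rw [lintegral_eq_zero_iff (meas_momfun i _)] at hm
  filter_upwards [hm] with x hx
  simp only [Pi.zero_apply, ENNReal.ofReal_eq_zero] at hx
  have h0 : (x i) ^ (2 * (m + 1)) = 0 :=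
    le_antisymm hx ((even_two_mul (m+1)).pow_nonneg _)
  exact pow_eq_zero_iff (by omega) |>.mp h0

lemma moments_ne_top {n : ℕ} (μ : Measure (Fin n → ℝ)) [IsFiniteMeasure μ] (i : Fin n)
    (h : ∑' k : ℕ, (∫⁻ x, ENNReal.ofReal ((x i) ^ (2 * (k + 1))) ∂μ) ^
        (-1 / (2 * ((k : ℝ) + 1))) = ⊤)
    (j : ℕ) : (∫⁻ x, ENNReal.ofReal ((x i) ^ (2 * j)) ∂μ) ≠ ⊤ := by
  intro htop
  rcases Nat.eq_zero_or_pos j with rfl | hj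
  · simp only [Nat.mul_zero, pow_zero, ENNReal.ofReal_one, lintegral_one] at htop
    exact (measure_ne_top μ _) htop
  by_cases hz : ∃ m : ℕ, (∫⁻ x, ENNReal.ofReal ((x i) ^ (2 * (m + 1))) ∂μ) = 0
  · obtain ⟨m, hm⟩ := hz
    have hx0 := ae_coord_zero hm
    have : (∫⁻ x, ENNReal.ofReal ((x i) ^ (2 * j)) ∂μ) = 0 := by
      rw [lintegral_eq_zero_iff (meas_momfun i _)]
      filter_upwards [hx0] with x hx
      simp [hx, zero_pow (by omega : 2 * j ≠ 0)]
    exact ENNReal.zero_ne_top (this.symm.trans htop)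
  · push_neg at hz
    have hterm0 : ∀ k, j ≤ k + 1 →
        (∫⁻ x, ENNReal.ofReal ((x i) ^ (2 * (k + 1))) ∂μ) ^ (-1 / (2 * ((k : ℝ) + 1))) = 0 := by
      intro k hk
      have hMtop : (∫⁻ x, ENNReal.ofReal ((x i) ^ (2 * (k + 1))) ∂μ) = ⊤ := by
        by_contra hne
        have := mom_mono μ i hk
        rw [htop] at this
        exact (ENNReal.add_ne_top.mpr ⟨measure_ne_top μ _, hne⟩) (top_le_iff.mp this)
      rw [hMtop]
      exact ENNReal.top_rpow_of_neg (carleman_exp_neg k)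
    have hne_top : ∀ k : ℕ, (∫⁻ x, ENNReal.ofReal ((x i) ^ (2 * (k + 1))) ∂μ) ^
        (-1 / (2 * ((k : ℝ) + 1))) ≠ ⊤ := by
      intro kk
      rw [Ne, ENNReal.rpow_eq_top_iff]
      rintro (⟨h0, _⟩ | ⟨_, hpos⟩)
      · exact hz kk h0
      · exact absurd hpos (not_lt.mpr (carleman_exp_neg kk).le)
    rw [tsum_eq_sum (s := Finset.range j)
        (fun k hk => hterm0 k
          ((le_of_not_gt fun hc => hk (Finset.mem_range.mpr hc)).trans (Nat.le_succ k)))] at h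
    exact absurd h (ENNReal.sum_lt_top.mpr fun k _ => (hne_top k).lt_top).ne



lemma mom_holder {n : ℕ} (μ : Measure (Fin n → ℝ)) [IsFiniteMeasure μ] (i : Fin n)
    {j : ℕ} (hj : 1 ≤ j) :
    (∫⁻ x, ENNReal.ofReal ((x i) ^ (2 * j)) ∂μ) ≤
      (∫⁻ x, ENNReal.ofReal ((x i) ^ (2 * (j + 1))) ∂μ) ^ ((j : ℝ) / ((j : ℝ) + 1)) *
        (μ Set.univ) ^ (1 / ((j : ℝ) + 1)) := by
  have hj0 : (0:ℝ) < (j:ℝ) := by exact_mod_cast hj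
  set p : ℝ := ((j : ℝ) + 1) / j with hp
  have hpq : Real.HolderConjugate p ((j : ℝ) + 1) := by
    rw [Real.holderConjugate_iff]
    constructor
    · rw [hp]; rw [lt_div_iff₀ hj0]; linarith
    · rw [hp]; field_simp
  have key := ENNReal.lintegral_mul_le_Lp_mul_Lq μ hpq
    (f := fun x => ENNReal.ofReal ((x i) ^ (2 * j))) (g := fun _ => 1)
    (meas_momfun i _).aemeasurable aemeasurable_const
  have hpt : ∀ t : ℝ, (ENNReal.ofReal (t ^ (2 * j))) ^ p = ENNReal.ofReal (t ^ (2 * (j + 1))) := by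
    intro t
    rw [ENNReal.ofReal_rpow_of_nonneg ((even_two_mul j).pow_nonneg t)
      (by positivity : (0:ℝ) ≤ p)]
    congr 1
    have h1 : t ^ (2 * j) = (t ^ 2) ^ (j : ℕ) := by rw [← pow_mul]
    have h2 : t ^ (2 * (j + 1)) = (t ^ 2) ^ (j + 1 : ℕ) := by rw [← pow_mul]
    rw [h1, h2, ← Real.rpow_natCast (t ^ 2) j, ← Real.rpow_natCast (t ^ 2) (j + 1),
      ← Real.rpow_mul (sq_nonneg t)]
    congr 1
    rw [hp]
    push_cast
    field_simp
  simp only [Pi.mul_apply, mul_one, ENNReal.one_rpow, lintegral_one] at key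
  calc (∫⁻ x, ENNReal.ofReal ((x i) ^ (2 * j)) ∂μ)
      ≤ (∫⁻ x, (ENNReal.ofReal ((x i) ^ (2 * j))) ^ p ∂μ) ^ (1 / p) *
        (μ Set.univ) ^ (1 / ((j : ℝ) + 1)) := key
    _ = _ := by
        congr 1
        · congr 1
          · exact lintegral_congr fun x => hpt (x i)
          · rw [hp]; field_simp



lemma mom_CS {n : ℕ} (μ : Measure (Fin n → ℝ)) [IsFiniteMeasure μ] (i : Fin n)
    (f : (Fin n → ℝ) → ℝ) (hf : MemLp f 2 μ) (hf0 : 0 ≤ᵐ[μ] f) (k : ℕ) :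
    (∫⁻ x, ENNReal.ofReal ((x i) ^ (2 * k))
        ∂(μ.withDensity fun x => ENNReal.ofReal (f x))) ≤
      ENNReal.ofReal ((∫ x, f x ^ 2 ∂μ) ^ ((1 : ℝ) / 2)) *
        (∫⁻ x, ENNReal.ofReal ((x i) ^ (2 * (2 * k))) ∂μ) ^ ((1 : ℝ) / 2) := by
  have hD : AEMeasurable (fun x => ENNReal.ofReal (f x)) μ :=
    ENNReal.measurable_ofReal.comp_aemeasurable hf.aestronglyMeasurable.aemeasurable
  rw [lintegral_withDensity_eq_lintegral_mul₀ hD (meas_momfun i _).aemeasurable]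
  have hpq : Real.HolderConjugate 2 2 := Real.holderConjugate_iff.mpr ⟨one_lt_two, by norm_num⟩
  have key := ENNReal.lintegral_mul_le_Lp_mul_Lq μ hpq
    (f := fun x => ENNReal.ofReal ((x i) ^ (2 * k)))
    (g := fun x => ENNReal.ofReal (f x)) (meas_momfun i _).aemeasurable hD
  have hcomm : (∫⁻ a, ((fun x => ENNReal.ofReal (f x)) *
      (fun x : Fin n → ℝ => ENNReal.ofReal ((x i) ^ (2 * k)))) a ∂μ) =
      ∫⁻ a, ((fun x : Fin n → ℝ => ENNReal.ofReal ((x i) ^ (2 * k))) *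
      (fun x => ENNReal.ofReal (f x))) a ∂μ := by
    apply lintegral_congr; intro x; simp [mul_comm]
  rw [hcomm]
  refine key.trans (le_of_eq ?_)
  have e1 : (∫⁻ a : Fin n → ℝ, (ENNReal.ofReal ((a i) ^ (2 * k))) ^ (2:ℝ) ∂μ) =
      ∫⁻ x, ENNReal.ofReal ((x i) ^ (2 * (2 * k))) ∂μ := by
    apply lintegral_congr; intro x
    rw [ENNReal.ofReal_rpow_of_nonneg ((even_two_mul k).pow_nonneg _) (by norm_num)]
    congr 1
    rw [show ((2:ℝ) : ℝ) = ((2:ℕ) : ℝ) by norm_num, Real.rpow_natCast, ← pow_mul]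
    ring_nf
  have e2 : (∫⁻ a, (ENNReal.ofReal (f a)) ^ (2:ℝ) ∂μ) =
      ENNReal.ofReal (∫ x, f x ^ 2 ∂μ) := by
    have step : (∫⁻ a, (ENNReal.ofReal (f a)) ^ (2:ℝ) ∂μ) =
        ∫⁻ a, ENNReal.ofReal (f a ^ 2) ∂μ := by
      apply lintegral_congr_ae
      filter_upwards [hf0] with x hx
      rw [ENNReal.ofReal_rpow_of_nonneg hx (by norm_num)]
      congr 1
      rw [show ((2:ℝ) : ℝ) = ((2:ℕ) : ℝ) by norm_num, Real.rpow_natCast]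
    rw [step, ← ofReal_integral_eq_lintegral_ofReal hf.integrable_sq
      (Filter.Eventually.of_forall fun x => sq_nonneg _)]
  rw [e1, e2, mul_comm]
  congr 1
  rw [ENNReal.ofReal_rpow_of_nonneg (integral_nonneg fun x => sq_nonneg _) (by norm_num)]

lemma rhs_eq {n : ℕ} (μ : Measure (Fin n → ℝ)) [IsFiniteMeasure μ] (i : Fin n)
    (f : (Fin n → ℝ) → ℝ) (k : ℕ)
    (hfin : (∫⁻ x, ENNReal.ofReal ((x i) ^ (4 * k)) ∂μ) ≠ ⊤) :
    ENNReal.ofReal ((∫ x, f x ^ 2 ∂μ) ^ ((1 : ℝ) / 2) *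
        (∫ x, (x i) ^ (4 * k) ∂μ) ^ ((1 : ℝ) / 2)) =
      ENNReal.ofReal ((∫ x, f x ^ 2 ∂μ) ^ ((1 : ℝ) / 2)) *
        (∫⁻ x, ENNReal.ofReal ((x i) ^ (4 * k)) ∂μ) ^ ((1 : ℝ) / 2) := by
  have hgm : Integrable (fun x : Fin n → ℝ => (x i) ^ (4 * k)) μ := by
    refine ⟨((measurable_pi_apply i).pow_const (4 * k)).aestronglyMeasurable, ?_⟩
    rw [hasFiniteIntegral_iff_ofReal
      (Filter.Eventually.of_forall fun x => Even.pow_nonneg ⟨2*k, by ring⟩ _)]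
    exact hfin.lt_top
  rw [ENNReal.ofReal_mul (Real.rpow_nonneg (integral_nonneg fun x => sq_nonneg _) _)]
  congr 1
  rw [← ofReal_integral_eq_lintegral_ofReal hgm
    (Filter.Eventually.of_forall fun x => Even.pow_nonneg ⟨2*k, by ring⟩ _),
    ← ENNReal.ofReal_rpow_of_nonneg (integral_nonneg fun x => Even.pow_nonneg ⟨2*k, by ring⟩ _) (by norm_num)]


lemma carleman_transfer {n : ℕ} (μ ν : Measure (Fin n → ℝ)) [IsFiniteMeasure μ] (i : Fin n)
    (hC : ∑' k : ℕ, (∫⁻ x, ENNReal.ofReal ((x i) ^ (2 * (k + 1))) ∂μ) ^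
        (-1 / (2 * ((k : ℝ) + 1))) = ⊤)
    (hfin : ∀ j : ℕ, (∫⁻ x, ENNReal.ofReal ((x i) ^ (2 * j)) ∂μ) ≠ ⊤)
    (hac : ν ≪ μ)
    (C : ℝ≥0∞) (hCtop : C ≠ ⊤)
    (hb : ∀ k : ℕ, (∫⁻ x, ENNReal.ofReal ((x i) ^ (2 * (k + 1))) ∂ν) ≤
        C * (∫⁻ x, ENNReal.ofReal ((x i) ^ (2 * (2 * (k + 1)))) ∂μ) ^ ((1 : ℝ) / 2)) :
    ∑' k : ℕ, (∫⁻ x, ENNReal.ofReal ((x i) ^ (2 * (k + 1))) ∂ν) ^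
        (-1 / (2 * ((k : ℝ) + 1))) = ⊤ := by
  set M : ℕ → ℝ≥0∞ := fun j => ∫⁻ x, ENNReal.ofReal ((x i) ^ (2 * j)) ∂μ with hM
  set N : ℕ → ℝ≥0∞ := fun j => ∫⁻ x, ENNReal.ofReal ((x i) ^ (2 * j)) ∂ν with hN
  -- degenerate case
  by_cases hM1 : M 1 = 0
  · have hx0 : ∀ᵐ x ∂μ, x i = 0 := ae_coord_zero (m := 0) (by simpa using hM1)
    have hx0ν : ∀ᵐ x ∂ν, x i = 0 := hac hx0
    have hN1 : N 1 = 0 := by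
      rw [hN]
      rw [lintegral_eq_zero_iff (meas_momfun i _)]
      filter_upwards [hx0ν] with x hx
      simp [hx]
    rw [eq_top_iff]
    calc (⊤ : ℝ≥0∞) = (N (0 + 1)) ^ (-1 / (2 * ((0 : ℝ) + 1))) := by
          rw [show (0:ℕ) + 1 = 1 from rfl, hN1]
          rw [ENNReal.zero_rpow_of_neg (by simpa using carleman_exp_neg 0)]
      _ ≤ _ := by
          have := ENNReal.le_tsum (f := fun k : ℕ =>
            (N (k + 1)) ^ (-1 / (2 * ((k : ℝ) + 1)))) 0
          simpa using this
  -- main case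
  have hMne0 : ∀ j : ℕ, 1 ≤ j → M j ≠ 0 := by
    intro j hj h0
    obtain ⟨m, rfl⟩ := Nat.exists_eq_add_of_le hj
    have hx0 : ∀ᵐ x ∂μ, x i = 0 := ae_coord_zero (m := m) (by
      rw [hM] at h0; rw [show 2 * (m + 1) = 2 * (1 + m) by ring]; exact h0)
    apply hM1
    rw [hM, lintegral_eq_zero_iff (meas_momfun i _)]
    filter_upwards [hx0] with x hx
    simp [hx]
  set T : ℝ≥0∞ := μ Set.univ with hT
  have hTtop : T ≠ ⊤ := measure_ne_top μ _
  have hT0 : T ≠ 0 := by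
    intro h0
    apply hMne0 1 le_rfl
    rw [hM, Measure.measure_univ_eq_zero.mp h0]
    simp
  set b : ℕ → ℝ≥0∞ := fun j => (M j) ^ (-1 / (2 * (j : ℝ))) with hb_def
  set bt : ℕ → ℝ≥0∞ := fun j => (M j / T) ^ (-1 / (2 * (j : ℝ))) with hbt_def
  have hbt_eq : ∀ j : ℕ, bt j = b j * T ^ (1 / (2 * (j : ℝ))) := by
    intro j
    rw [hbt_def, hb_def]
    simp only []
    rw [div_eq_mul_inv, ENNReal.mul_rpow_of_ne_top (hfin j) (ENNReal.inv_ne_top.mpr hT0),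
      ENNReal.inv_rpow, ← ENNReal.rpow_neg, neg_div, neg_neg]
  have hS1 : ∑' k : ℕ, b (k + 1) = ⊤ := by
    rw [← hC]
    apply tsum_congr
    intro k
    rw [hb_def]
    congr 1
    push_cast
    ring
  set t₁ : ℝ≥0∞ := min 1 (T ^ ((1:ℝ)/2)) with ht₁
  set t₂ : ℝ≥0∞ := max 1 (T ^ ((1:ℝ)/2)) with ht₂
  have hTp : (0:ℝ≥0∞) < T ^ ((1:ℝ)/2) :=
    ENNReal.rpow_pos (pos_iff_ne_zero.mpr hT0) hTtop
  have ht₁0 : t₁ ≠ 0 := by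
    rw [ht₁]
    exact (lt_min one_pos hTp).ne'
  have ht₂top : t₂ ≠ ⊤ := by
    rw [ht₂]
    simp only [ne_eq, max_eq_top, not_or]
    exact ⟨one_ne_top, ENNReal.rpow_ne_top_of_nonneg (by norm_num) hTtop⟩
  have hsle : ∀ j : ℕ, 1 ≤ j → 1 / (2 * (j : ℝ)) ≤ 1 / 2 := by
    intro j hj
    have : (1:ℝ) ≤ (j:ℝ) := by exact_mod_cast hj
    rw [div_le_div_iff₀ (by linarith) (by norm_num)]
    linarith
  have hspos : ∀ j : ℕ, 1 ≤ j → (0:ℝ) < 1 / (2 * (j : ℝ)) := by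
    intro j hj
    have : (1:ℝ) ≤ (j:ℝ) := by exact_mod_cast hj
    positivity
  have hTlb : ∀ j : ℕ, 1 ≤ j → t₁ ≤ T ^ (1 / (2 * (j : ℝ))) := by
    intro j hj
    rcases le_total T 1 with hle | hge
    · exact le_trans (min_le_right _ _)
        (ENNReal.rpow_le_rpow_of_exponent_ge hle (hsle j hj))
    · refine le_trans (min_le_left _ _) ?_
      calc (1:ℝ≥0∞) = T ^ (0:ℝ) := (ENNReal.rpow_zero (x := T)).symm
        _ ≤ T ^ (1 / (2 * (j : ℝ))) :=
          ENNReal.rpow_le_rpow_of_exponent_le hge (hspos j hj).le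
  have hTub : ∀ j : ℕ, 1 ≤ j → T ^ (1 / (2 * (j : ℝ))) ≤ t₂ := by
    intro j hj
    rcases le_total T 1 with hle | hge
    · exact le_trans (ENNReal.rpow_le_one hle (hspos j hj).le) (le_max_left _ _)
    · refine le_trans ?_ (le_max_right _ _)
      exact ENNReal.rpow_le_rpow_of_exponent_le hge (hsle j hj)
  have hS2 : ∑' k : ℕ, bt (k + 1) = ⊤ := by
    rw [eq_top_iff]
    calc (⊤ : ℝ≥0∞) = (∑' k : ℕ, b (k + 1)) * t₁ := by
          rw [hS1, ENNReal.top_mul ht₁0]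
      _ = ∑' k : ℕ, b (k + 1) * t₁ := (ENNReal.tsum_mul_right).symm
      _ ≤ ∑' k : ℕ, bt (k + 1) := by
          apply ENNReal.tsum_le_tsum
          intro k
          rw [hbt_eq]
          exact mul_le_mul_right (hTlb (k + 1) (Nat.le_add_left 1 k)) _
  have hS3 : ∀ j : ℕ, 1 ≤ j → bt (j + 1) ≤ bt j := by
    intro j hj
    have hjR : (1:ℝ) ≤ (j:ℝ) := by exact_mod_cast hj
    set a : ℝ := (j : ℝ) / ((j : ℝ) + 1) with ha
    have key : M j / T ≤ (M (j + 1) / T) ^ a := by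
      have h1 := mom_holder μ i hj
      have h2 : M j / T ≤ (M (j + 1)) ^ a * (T ^ (1 / ((j:ℝ) + 1))) / T :=
        ENNReal.div_le_div_right h1 T
      have h3 : (M (j + 1)) ^ a * (T ^ (1 / ((j:ℝ) + 1))) / T
          = (M (j + 1)) ^ a * (T ^ a)⁻¹ := by
        rw [mul_div_assoc]
        congr 1
        rw [ENNReal.div_eq_inv_mul, ← ENNReal.rpow_neg_one T,
          ← ENNReal.rpow_add _ _ hT0 hTtop, ← ENNReal.rpow_neg]
        congr 1
        rw [ha]
        field_simp
        ring
      have h4 : (M (j + 1) / T) ^ a = (M (j + 1)) ^ a * (T ^ a)⁻¹ := by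
        rw [div_eq_mul_inv, ENNReal.mul_rpow_of_ne_top (hfin (j+1))
          (ENNReal.inv_ne_top.mpr hT0), ENNReal.inv_rpow]
      rw [h4]
      rw [h3] at h2
      exact h2
    have step := ennrpow_anti key (by
      rw [neg_div]
      simp only [Left.neg_nonpos_iff]
      positivity : -1 / (2 * (j : ℝ)) ≤ 0)
    calc bt (j + 1) = ((M (j + 1) / T) ^ a) ^ (-1 / (2 * (j : ℝ))) := by
          rw [hbt_def]
          simp only []
          rw [← ENNReal.rpow_mul]
          congr 1
          rw [ha]
          push_cast
          field_simp
      _ ≤ (M j / T) ^ (-1 / (2 * (j : ℝ))) := step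
      _ = bt j := rfl
  have hbt1top : bt 1 ≠ ⊤ := by
    rw [hbt_def]
    simp only []
    rw [Ne, ENNReal.rpow_eq_top_iff]
    rintro (⟨h0, _⟩ | ⟨_, hpos⟩)
    · rw [ENNReal.div_eq_zero_iff] at h0
      rcases h0 with h0 | h0
      · exact hMne0 1 le_rfl h0
      · exact hTtop h0
    · have : -1 / (2 * ((1:ℕ) : ℝ)) < 0 := by norm_num
      linarith
  have hS5 : ∑' k : ℕ, bt (k + 2) = ⊤ := by
    have := tsum_eq_zero_add' (f := fun k : ℕ => bt (k + 1)) ENNReal.summable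
    rw [hS2] at this
    by_contra hne
    have : (⊤:ℝ≥0∞) = bt 1 + ∑' k : ℕ, bt (k + 1 + 1) := this
    rw [show (∑' k : ℕ, bt (k + 1 + 1)) = ∑' k : ℕ, bt (k + 2) from tsum_congr fun k => by
      ring_nf] at this
    exact ENNReal.add_ne_top.mpr ⟨hbt1top, hne⟩ this.symm
  have hS6 : ∑' k : ℕ, bt (2 * k + 2) = ⊤ := by
    have heo := tsum_even_add_odd (f := fun k : ℕ => bt (k + 2))
      ENNReal.summable ENNReal.summable
    rw [hS5] at heo
    by_contra hne
    have hodd : ∑' k : ℕ, bt (2 * k + 1 + 2) ≤ ∑' k : ℕ, bt (2 * k + 2) := by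
      apply ENNReal.tsum_le_tsum
      intro k
      have := hS3 (2 * k + 2) (by omega)
      simpa [show 2 * k + 2 + 1 = 2 * k + 1 + 2 by ring] using this
    have : (∑' k : ℕ, bt (2 * k + 2)) + (∑' k : ℕ, bt (2 * k + 1 + 2)) = ⊤ := heo
    have hle : (⊤:ℝ≥0∞) ≤ (∑' k : ℕ, bt (2 * k + 2)) + (∑' k : ℕ, bt (2 * k + 2)) := by
      rw [← this]
      exact add_le_add_right hodd _
    exact ENNReal.add_ne_top.mpr ⟨hne, hne⟩ (top_le_iff.mp hle)
  have hS7 : ∑' k : ℕ, b (2 * (k + 1)) = ⊤ := by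
    rw [eq_top_iff]
    calc (⊤:ℝ≥0∞) = (∑' k : ℕ, bt (2 * k + 2)) * t₂⁻¹ := by
          rw [hS6, ENNReal.top_mul (ENNReal.inv_ne_zero.mpr ht₂top)]
      _ = ∑' k : ℕ, bt (2 * k + 2) * t₂⁻¹ := (ENNReal.tsum_mul_right).symm
      _ ≤ ∑' k : ℕ, b (2 * (k + 1)) := by
          apply ENNReal.tsum_le_tsum
          intro k
          rw [show 2 * (k + 1) = 2 * k + 2 by ring]
          rw [hbt_eq (2 * k + 2)]
          calc b (2 * k + 2) * T ^ (1 / (2 * ((2 * k + 2 : ℕ) : ℝ))) * t₂⁻¹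
              ≤ b (2 * k + 2) * t₂ * t₂⁻¹ :=
                mul_le_mul_left (mul_le_mul_right (hTub (2 * k + 2) (by omega)) _) _
            _ = b (2 * k + 2) := by
                rw [mul_assoc, ENNReal.mul_inv_cancel
                  (lt_of_lt_of_le one_pos (le_max_left _ _)).ne' ht₂top, mul_one]
  set c : ℝ≥0∞ := min 1 C⁻¹ with hc
  have hc0 : c ≠ 0 := by
    rw [hc]
    exact (lt_min one_pos (pos_iff_ne_zero.mpr (ENNReal.inv_ne_zero.mpr hCtop))).ne'
  have hcle : ∀ k : ℕ, c ≤ C ^ (-1 / (2 * ((k : ℝ) + 1))) := by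
    intro k
    rcases le_total C 1 with hle | hge
    · refine le_trans (min_le_left _ _) ?_
      calc (1:ℝ≥0∞) = C ^ (0:ℝ) := (ENNReal.rpow_zero (x := C)).symm
        _ ≤ C ^ (-1 / (2 * ((k : ℝ) + 1))) :=
          ENNReal.rpow_le_rpow_of_exponent_ge hle (carleman_exp_neg k).le
    · refine le_trans (min_le_right _ _) ?_
      have hrw : C ^ (-1 / (2 * ((k : ℝ) + 1)))
          = (C ^ (-(-1 / (2 * ((k : ℝ) + 1)))))⁻¹ := by
        rw [← ENNReal.rpow_neg, neg_neg]
      rw [hrw]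
      apply ENNReal.inv_le_inv.mpr
      calc C ^ (-(-1 / (2 * ((k : ℝ) + 1)))) ≤ C ^ (1:ℝ) := by
            apply ENNReal.rpow_le_rpow_of_exponent_le hge
            rw [neg_div, neg_neg, div_le_one (by positivity)]
            have : (0:ℝ) ≤ (k:ℝ) := Nat.cast_nonneg k
            linarith
        _ = C := ENNReal.rpow_one C
  have hterm : ∀ k : ℕ, b (2 * (k + 1)) * c ≤
      (N (k + 1)) ^ (-1 / (2 * ((k : ℝ) + 1))) := by
    intro k
    have hr : -1 / (2 * ((k : ℝ) + 1)) ≤ 0 := (carleman_exp_neg k).le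
    have step1 : (C * (M (2 * (k + 1))) ^ ((1:ℝ)/2)) ^ (-1 / (2 * ((k : ℝ) + 1))) ≤
        (N (k + 1)) ^ (-1 / (2 * ((k : ℝ) + 1))) := ennrpow_anti (hb k) hr
    refine le_trans ?_ step1
    rw [ENNReal.mul_rpow_of_ne_top hCtop
      (ENNReal.rpow_ne_top_of_nonneg (by norm_num) (hfin (2 * (k + 1)))),
      ← ENNReal.rpow_mul]
    rw [mul_comm (C ^ _)]
    apply mul_le_mul'
    · apply le_of_eq
      rw [hb_def]
      congr 1
      push_cast
      field_simp
      rfl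
    · exact hcle k
  rw [eq_top_iff]
  calc (⊤:ℝ≥0∞) = (∑' k : ℕ, b (2 * (k + 1))) * c := by
        rw [hS7, ENNReal.top_mul hc0]
    _ = ∑' k : ℕ, b (2 * (k + 1)) * c := (ENNReal.tsum_mul_right).symm
    _ ≤ _ := ENNReal.tsum_le_tsum hterm


/-- The multivariate Carleman condition for a measure on ℝⁿ. -/
def SatisfiesCarleman (n : ℕ) (ν : Measure (Fin n → ℝ)) : Prop :=
  ∀ i : Fin n,
    ∑' k : ℕ,
      (∫⁻ x, ENNReal.ofReal ((x i) ^ (2 * (k + 1))) ∂ν) ^ (-1 / (2 * ((k : ℝ) + 1))) = ⊤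

/-- If `μ` is a finite measure satisfying Carleman and `f ∈ L²(μ)` with `f ≥ 0` a.e.,
then the measure `ν = f dμ` satisfies Carleman; in particular every even marginal moment
of `ν` is bounded by `‖f‖_{L²(μ)} (∫ xᵢ^{4k} dμ)^{1/2} < ∞`. -/
theorem withDensity_carleman (n : ℕ) (μ : Measure (Fin n → ℝ)) [IsFiniteMeasure μ]
    (hC : SatisfiesCarleman n μ)
    (f : (Fin n → ℝ) → ℝ) (hf : MemLp f 2 μ) (hf0 : 0 ≤ᵐ[μ] f) :
    SatisfiesCarleman n (μ.withDensity fun x => ENNReal.ofReal (f x)) ∧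
      ∀ (i : Fin n) (k : ℕ),
        ∫⁻ x, ENNReal.ofReal ((x i) ^ (2 * k))
            ∂(μ.withDensity fun x => ENNReal.ofReal (f x)) ≤
          ENNReal.ofReal
            ((∫ x, (f x) ^ 2 ∂μ) ^ ((1 : ℝ) / 2) *
              (∫ x, (x i) ^ (4 * k) ∂μ) ^ ((1 : ℝ) / 2)) := by
  have hfin : ∀ (i : Fin n) (j : ℕ),
      (∫⁻ x, ENNReal.ofReal ((x i) ^ (2 * j)) ∂μ) ≠ ⊤ :=
    fun i => moments_ne_top μ i (hC i)
  constructor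
  · intro i
    exact carleman_transfer μ _ i (hC i) (hfin i)
      (withDensity_absolutelyContinuous μ _)
      (ENNReal.ofReal ((∫ x, f x ^ 2 ∂μ) ^ ((1 : ℝ) / 2))) ENNReal.ofReal_ne_top
      (fun k => mom_CS μ i f hf hf0 (k + 1))
  · intro i k
    have h1 := mom_CS μ i f hf hf0 k
    have hrw : 2 * (2 * k) = 4 * k := by ring
    rw [hrw] at h1
    rw [rhs_eq μ i f k (by rw [← hrw]; exact hfin i (2 * k))]
    exact h1
end

section
/- Let p : ℝⁿ → ℝ be a function satisfying p(x) ≥ a‖x‖^d − b for constants a > 0, b ∈ ℝ and even integer d ≥ 2. Then the measure μ with density e^{-p(x)} with respect to Lebesgue measure on ℝⁿ is finite and satisfies the multivariate Carleman condition. -/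
open MeasureTheory Real ENNReal NNReal

lemma pow_le_factorial_mul_exp {u : ℝ} (hu : 0 ≤ u) (m : ℕ) :
    u ^ m ≤ (m.factorial : ℝ) * Real.exp u := by
  have h := Real.sum_le_exp_of_nonneg hu (m + 1)
  have h2 : u ^ m / (m.factorial : ℝ) ≤ Real.exp u := by
    refine le_trans ?_ h
    exact Finset.single_le_sum (f := fun i => u ^ i / (i.factorial : ℝ))
      (fun i _ => by positivity) (Finset.self_mem_range_succ m)
  have hm : (0:ℝ) < (m.factorial : ℝ) := by exact_mod_cast m.factorial_pos
  calc u ^ m = u ^ m / (m.factorial : ℝ) * (m.factorial : ℝ) := by field_simp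
    _ ≤ Real.exp u * (m.factorial : ℝ) := mul_le_mul_of_nonneg_right h2 hm.le
    _ = (m.factorial : ℝ) * Real.exp u := mul_comm _ _

lemma aux_pow_mul_exp_le {c : ℝ} (hc : 0 < c) {r : ℝ} (hr : 0 ≤ r) {j d : ℕ} (hj : j ≤ d)
    (m : ℕ) : r ^ (j * m) * Real.exp (-(c * r ^ d)) ≤ Real.exp c * (m.factorial : ℝ) * (1 / c) ^ m := by
  have h1 : r ^ j ≤ r ^ d + 1 := by
    rcases le_total r 1 with h | h
    · have h1 : r ^ j ≤ 1 := pow_le_one₀ hr h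
      have h2 : (0:ℝ) ≤ r ^ d := by positivity
      linarith
    · have : r ^ j ≤ r ^ d := pow_le_pow_right₀ h hj
      linarith
  have h2 : (c * r ^ j) ^ m ≤ (m.factorial : ℝ) * Real.exp (c * r ^ j) :=
    pow_le_factorial_mul_exp (by positivity) m
  have h3 : Real.exp (c * r ^ j) ≤ Real.exp c * Real.exp (c * r ^ d) := by
    rw [← Real.exp_add]
    exact Real.exp_le_exp.mpr (by nlinarith)
  have hcm : (0:ℝ) < c ^ m := by positivity
  have key : (c * r ^ j) ^ m ≤ (m.factorial : ℝ) * (Real.exp c * Real.exp (c * r ^ d)) :=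
    h2.trans (mul_le_mul_of_nonneg_left h3 (by positivity))
  calc r ^ (j * m) * Real.exp (-(c * r ^ d))
      = (c * r ^ j) ^ m * Real.exp (-(c * r ^ d)) / c ^ m := by
        rw [mul_pow, pow_mul]; field_simp
    _ ≤ (m.factorial : ℝ) * (Real.exp c * Real.exp (c * r ^ d)) * Real.exp (-(c * r ^ d)) / c ^ m := by
        gcongr
    _ = Real.exp c * (m.factorial : ℝ) * (1 / c) ^ m := by
        rw [mul_assoc ((m.factorial : ℝ)), mul_assoc (Real.exp c), ← Real.exp_add, add_neg_cancel,
          Real.exp_zero, mul_one, one_div, inv_pow]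
        ring

lemma aux_lintegral_exp_lt_top (n : ℕ) {c : ℝ} (hc : 0 < c) {d : ℕ} (hd : 1 ≤ d) :
    ∫⁻ x : EuclideanSpace ℝ (Fin n), ENNReal.ofReal (Real.exp (-(c * ‖x‖ ^ d))) < ⊤ := by
  set K : ℝ := 2 ^ (n + 1) * (1 + Real.exp c * ((n+1).factorial : ℝ) * (1 / c) ^ (n + 1)) with hK
  have hptwise : ∀ x : EuclideanSpace ℝ (Fin n),
      Real.exp (-(c * ‖x‖ ^ d)) ≤ K * (1 + ‖x‖) ^ (-((n:ℝ) + 1)) := by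
    intro x
    set s := ‖x‖ with hs
    have hs0 : 0 ≤ s := norm_nonneg x
    have hbig : (1 + s) ^ (n + 1) * Real.exp (-(c * s ^ d)) ≤ K := by
      have hexp1 : Real.exp (-(c * s ^ d)) ≤ 1 := by
        apply Real.exp_le_one_iff.mpr
        have : (0:ℝ) ≤ c * s ^ d := by positivity
        linarith
      have h2 : (1 + s) ^ (n + 1) ≤ 2 ^ (n + 1) * (1 + s ^ (n + 1)) := by
        rcases le_total s 1 with h | h
        · have : (1 + s) ^ (n + 1) ≤ 2 ^ (n + 1) := by
            apply pow_le_pow_left₀ (by linarith) (by linarith)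
          nlinarith [pow_nonneg hs0 (n+1), pow_nonneg (by linarith : (0:ℝ) ≤ 1 + s) (n+1),
            pow_pos (by norm_num : (0:ℝ) < 2) (n+1)]
        · have h1s : (1 + s) ^ (n + 1) ≤ (2 * s) ^ (n + 1) := by
            apply pow_le_pow_left₀ (by linarith) (by linarith)
          rw [mul_pow] at h1s
          nlinarith [pow_pos (by norm_num : (0:ℝ) < 2) (n+1), pow_nonneg hs0 (n+1)]
      have h3 : s ^ (n + 1) * Real.exp (-(c * s ^ d)) ≤
          Real.exp c * ((n+1).factorial : ℝ) * (1 / c) ^ (n + 1) := by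
        have := aux_pow_mul_exp_le hc hs0 hd (n + 1)
        simpa [one_mul] using this
      have hexp0 : 0 ≤ Real.exp (-(c * s ^ d)) := (Real.exp_pos _).le
      calc (1 + s) ^ (n + 1) * Real.exp (-(c * s ^ d))
          ≤ 2 ^ (n + 1) * (1 + s ^ (n + 1)) * Real.exp (-(c * s ^ d)) := by
            exact mul_le_mul_of_nonneg_right h2 hexp0
        _ = 2 ^ (n + 1) * (Real.exp (-(c * s ^ d)) + s ^ (n+1) * Real.exp (-(c * s ^ d))) := by
            ring
        _ ≤ K := by
            rw [hK]
            have h4 : (0:ℝ) < 2 ^ (n+1) := by positivity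
            nlinarith
    have hpos : (0:ℝ) < (1 + s) ^ (n + 1) := by positivity
    have : (1 + s) ^ (-((n:ℝ) + 1)) = ((1 + s) ^ (n + 1 : ℕ))⁻¹ := by
      rw [← Real.rpow_natCast (1 + s) (n + 1), ← Real.rpow_neg (by linarith)]
      norm_num
    rw [this, mul_comm K, ← div_eq_inv_mul, le_div_iff₀ hpos, mul_comm]
    exact hbig
  have hK0 : 0 ≤ K := by positivity
  calc ∫⁻ x : EuclideanSpace ℝ (Fin n), ENNReal.ofReal (Real.exp (-(c * ‖x‖ ^ d)))
      ≤ ∫⁻ x : EuclideanSpace ℝ (Fin n),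
          ENNReal.ofReal K * ENNReal.ofReal ((1 + ‖x‖) ^ (-((n:ℝ) + 1))) := by
        refine lintegral_mono fun x => ?_
        rw [← ENNReal.ofReal_mul hK0]
        exact ENNReal.ofReal_le_ofReal (hptwise x)
    _ = ENNReal.ofReal K *
          ∫⁻ x : EuclideanSpace ℝ (Fin n), ENNReal.ofReal ((1 + ‖x‖) ^ (-((n:ℝ) + 1))) :=
        lintegral_const_mul' _ _ ENNReal.ofReal_ne_top
    _ < ⊤ := by
        refine ENNReal.mul_lt_top ENNReal.ofReal_lt_top ?_
        refine finite_integral_one_add_norm ?_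
        rw [finrank_euclideanSpace, Fintype.card_fin]
        linarith

lemma coord_abs_le_norm {n : ℕ} (x : EuclideanSpace ℝ (Fin n)) (i : Fin n) : |x i| ≤ ‖x‖ := by
  rw [EuclideanSpace.norm_eq]
  calc |x i| = Real.sqrt (‖x i‖ ^ 2) := by
        rw [Real.norm_eq_abs, sq_abs, Real.sqrt_sq_eq_abs]
    _ ≤ Real.sqrt (∑ j, ‖x j‖ ^ 2) := by
        apply Real.sqrt_le_sqrt
        exact Finset.single_le_sum (f := fun j => ‖x j‖ ^ 2) (fun j _ => by positivity)
          (Finset.mem_univ i)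

lemma tsum_inv_sqrt_top :
    ∑' k : ℕ, ((k:ℝ≥0∞) + 1) ^ (-(1/2 : ℝ)) = ⊤ := by
  have hterm : ∀ k : ℕ, ((k:ℝ≥0∞) + 1)⁻¹ ≤ ((k:ℝ≥0∞) + 1) ^ (-(1/2 : ℝ)) := by
    intro k
    rw [← ENNReal.rpow_neg_one]
    exact ENNReal.rpow_le_rpow_of_exponent_le (le_add_self) (by norm_num)
  refine top_le_iff.mp (le_trans ?_ (ENNReal.tsum_le_tsum hterm))
  rw [top_le_iff]
  by_contra h
  have h2 : ∀ k : ℕ, ((k:ℝ≥0∞) + 1)⁻¹ = (((((k+1:ℕ)):ℝ≥0)⁻¹ : ℝ≥0) : ℝ≥0∞) := by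
    intro k
    rw [ENNReal.coe_inv (by exact_mod_cast Nat.succ_ne_zero k)]
    push_cast
    ring_nf
  rw [tsum_congr h2] at h
  have h3 := ENNReal.tsum_coe_ne_top_iff_summable.mp h
  have h4 : Summable (fun k : ℕ => (((k+1:ℕ):ℝ))⁻¹) := by
    have := NNReal.summable_coe.mpr h3
    simpa using this
  have h5 : Summable (fun k : ℕ => ((k:ℝ))⁻¹) := by
    have := (summable_nat_add_iff (f := fun k : ℕ => ((k:ℝ))⁻¹) 1).mp
      (by push_cast at h4 ⊢; exact h4)
    exact this
  exact Real.not_summable_natCast_inv h5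


/-- If `p : ℝⁿ → ℝ` satisfies `p(x) ≥ a‖x‖^d − b` with `a > 0` and `d ≥ 2` even, then the
Gibbs measure `e^{-p(x)} dx` is finite and satisfies the multivariate Carleman condition. -/
theorem gibbs_carleman (n : ℕ) (p : EuclideanSpace ℝ (Fin n) → ℝ) (hp : Measurable p)
    (a b : ℝ) (ha : 0 < a) (d : ℕ) (hd : Even d) (hd2 : 2 ≤ d)
    (hbound : ∀ x, a * ‖x‖ ^ d - b ≤ p x) :
    IsFiniteMeasure (volume.withDensity fun x => ENNReal.ofReal (Real.exp (-p x))) ∧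
      ∀ i : Fin n,
        ∑' k : ℕ,
          (∫⁻ x, ENNReal.ofReal ((x i) ^ (2 * (k + 1)))
              ∂(volume.withDensity fun x => ENNReal.ofReal (Real.exp (-p x)))) ^
            (-1 / (2 * ((k : ℝ) + 1))) = ⊤ := by
  have hd1 : 1 ≤ d := le_trans one_le_two hd2
  have hg : Measurable fun x : EuclideanSpace ℝ (Fin n) => ENNReal.ofReal (Real.exp (-p x)) :=
    (Real.measurable_exp.comp hp.neg).ennreal_ofReal
  have ha2 : (0:ℝ) < a / 2 := half_pos ha
  constructor
  · constructor
    rw [withDensity_apply _ MeasurableSet.univ, setLIntegral_univ]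
    calc ∫⁻ x : EuclideanSpace ℝ (Fin n), ENNReal.ofReal (Real.exp (-p x))
        ≤ ∫⁻ x : EuclideanSpace ℝ (Fin n),
            ENNReal.ofReal (Real.exp b) * ENNReal.ofReal (Real.exp (-(a * ‖x‖ ^ d))) := by
          refine lintegral_mono fun x => ?_
          rw [← ENNReal.ofReal_mul (Real.exp_pos b).le, ← Real.exp_add]
          exact ENNReal.ofReal_le_ofReal (Real.exp_le_exp.mpr (by have := hbound x; linarith))
      _ = ENNReal.ofReal (Real.exp b) *
            ∫⁻ x : EuclideanSpace ℝ (Fin n), ENNReal.ofReal (Real.exp (-(a * ‖x‖ ^ d))) :=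
          lintegral_const_mul' _ _ ENNReal.ofReal_ne_top
      _ < ⊤ := ENNReal.mul_lt_top ENNReal.ofReal_lt_top (aux_lintegral_exp_lt_top n ha hd1)
  · intro i
    set Jv : ℝ≥0∞ := ∫⁻ x : EuclideanSpace ℝ (Fin n),
      ENNReal.ofReal (Real.exp (-(a/2 * ‖x‖ ^ d))) with hJv
    have hJ : Jv < ⊤ := aux_lintegral_exp_lt_top n ha2 hd1
    set A : ℝ := Real.exp b * Real.exp (a/2) with hA
    set B : ℝ := 1 / (a/2) with hB
    have hA0 : 0 ≤ A := by positivity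
    have hB0 : 0 ≤ B := by positivity
    set K : ℝ≥0∞ := ENNReal.ofReal A * Jv + ENNReal.ofReal B + 1 with hK
    have hK1 : (1:ℝ≥0∞) ≤ K := le_add_self
    have hKtop : K ≠ ⊤ :=
      ENNReal.add_ne_top.mpr ⟨ENNReal.add_ne_top.mpr
        ⟨ENNReal.mul_ne_top ENNReal.ofReal_ne_top hJ.ne, ENNReal.ofReal_ne_top⟩, ENNReal.one_ne_top⟩
    -- measurability of coordinates
    have hxi : Measurable fun x : EuclideanSpace ℝ (Fin n) => x i := by
      exact (EuclideanSpace.proj (𝕜 := ℝ) i).continuous.measurable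
    -- moment bound
    have hM : ∀ k : ℕ,
        (∫⁻ x, ENNReal.ofReal ((x i) ^ (2 * (k + 1)))
            ∂(volume.withDensity fun x => ENNReal.ofReal (Real.exp (-p x))))
          ≤ K * (K * ((k+1 : ℕ) : ℝ≥0∞)) ^ (k+1) := by
      intro k
      set m : ℕ := k + 1 with hm
      have hf : Measurable fun x : EuclideanSpace ℝ (Fin n) =>
          ENNReal.ofReal ((x i) ^ (2 * m)) := (hxi.pow_const _).ennreal_ofReal
      rw [lintegral_withDensity_eq_lintegral_mul volume hg hf]
      simp only [Pi.mul_apply]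
      have hpt : ∀ x : EuclideanSpace ℝ (Fin n),
          Real.exp (-p x) * (x i) ^ (2 * m) ≤
            A * (m.factorial : ℝ) * B ^ m * Real.exp (-(a/2 * ‖x‖ ^ d)) := by
        intro x
        set s : ℝ := ‖x‖ with hs
        have hs0 : 0 ≤ s := norm_nonneg x
        have h1 : (x i) ^ (2 * m) ≤ s ^ (2 * m) := by
          have he : Even (2 * m) := even_two_mul m
          have : (x i) ^ (2 * m) = |x i| ^ (2 * m) := by
            rw [← abs_pow, abs_of_nonneg (he.pow_nonneg _)]
          rw [this]
          exact pow_le_pow_left₀ (abs_nonneg _) (coord_abs_le_norm x i) _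
        have h2 : Real.exp (-p x) ≤
            Real.exp b * Real.exp (-(a/2 * s ^ d)) * Real.exp (-(a/2 * s ^ d)) := by
          rw [← Real.exp_add, ← Real.exp_add]
          refine Real.exp_le_exp.mpr ?_
          have hb := hbound x
          rw [← hs] at hb
          linarith
        have h3 : s ^ (2 * m) * Real.exp (-(a/2 * s ^ d)) ≤
            Real.exp (a/2) * (m.factorial : ℝ) * B ^ m :=
          aux_pow_mul_exp_le ha2 hs0 hd2 m
        have hxnn : (0:ℝ) ≤ (x i) ^ (2 * m) := (even_two_mul m).pow_nonneg _
        have hexp1 : (0:ℝ) ≤ Real.exp (-(a/2 * s ^ d)) := (Real.exp_pos _).le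
        have hexpb : (0:ℝ) ≤ Real.exp b := (Real.exp_pos _).le
        calc Real.exp (-p x) * (x i) ^ (2 * m)
            ≤ (Real.exp b * Real.exp (-(a/2 * s ^ d)) * Real.exp (-(a/2 * s ^ d))) *
                s ^ (2 * m) := by
              have hsp : (0:ℝ) ≤ s ^ (2*m) := by positivity
              exact mul_le_mul h2 h1 hxnn (by positivity)
          _ = Real.exp b * (s ^ (2 * m) * Real.exp (-(a/2 * s ^ d))) *
                Real.exp (-(a/2 * s ^ d)) := by ring
          _ ≤ Real.exp b * (Real.exp (a/2) * (m.factorial : ℝ) * B ^ m) *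
                Real.exp (-(a/2 * s ^ d)) := by
              apply mul_le_mul_of_nonneg_right _ hexp1
              exact mul_le_mul_of_nonneg_left h3 hexpb
          _ = A * (m.factorial : ℝ) * B ^ m * Real.exp (-(a/2 * s ^ d)) := by
              rw [hA]; ring
      calc ∫⁻ x : EuclideanSpace ℝ (Fin n),
              ENNReal.ofReal (Real.exp (-p x)) * ENNReal.ofReal ((x i) ^ (2 * m))
          ≤ ∫⁻ x : EuclideanSpace ℝ (Fin n), ENNReal.ofReal (A * (m.factorial : ℝ) * B ^ m) *
              ENNReal.ofReal (Real.exp (-(a/2 * ‖x‖ ^ d))) := by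
            refine lintegral_mono fun x => ?_
            rw [← ENNReal.ofReal_mul (Real.exp_pos _).le,
              ← ENNReal.ofReal_mul (by positivity)]
            exact ENNReal.ofReal_le_ofReal (hpt x)
        _ = ENNReal.ofReal (A * (m.factorial : ℝ) * B ^ m) * Jv :=
            lintegral_const_mul' _ _ ENNReal.ofReal_ne_top
        _ ≤ K * (K * ((m : ℕ) : ℝ≥0∞)) ^ m := by
            rw [ENNReal.ofReal_mul (by positivity), ENNReal.ofReal_mul hA0,
              ENNReal.ofReal_pow hB0, ENNReal.ofReal_natCast]
            have hfac : ((m.factorial : ℕ) : ℝ≥0∞) ≤ ((m : ℕ) : ℝ≥0∞) ^ m := by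
              rw [← Nat.cast_pow]
              exact_mod_cast Nat.cast_le.mpr m.factorial_le_pow
            have hAJ : ENNReal.ofReal A * Jv ≤ K := by
              rw [hK]; exact le_self_add.trans le_self_add
            have hBK : ENNReal.ofReal B ≤ K := by
              rw [hK]; exact le_add_self.trans le_self_add
            calc ENNReal.ofReal A * ((m.factorial : ℕ) : ℝ≥0∞) * ENNReal.ofReal B ^ m * Jv
                = (ENNReal.ofReal A * Jv) * (((m.factorial : ℕ) : ℝ≥0∞) *
                    ENNReal.ofReal B ^ m) := by ring
              _ ≤ K * (((m : ℕ) : ℝ≥0∞) ^ m * K ^ m) := by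
                  exact mul_le_mul' hAJ (mul_le_mul' hfac (pow_le_pow_left' hBK m))
              _ = K * (K * ((m : ℕ) : ℝ≥0∞)) ^ m := by rw [mul_pow]; ring
    -- antitonicity of negative rpow
    have hanti : ∀ {x y : ℝ≥0∞} {z : ℝ}, x ≤ y → z ≤ 0 → y ^ z ≤ x ^ z := by
      intro x y z hxy hz
      have h' : x ^ (-z) ≤ y ^ (-z) := ENNReal.rpow_le_rpow hxy (neg_nonneg.mpr hz)
      rw [show y ^ z = (y ^ (-z))⁻¹ from by rw [← ENNReal.rpow_neg, neg_neg],
        show x ^ z = (x ^ (-z))⁻¹ from by rw [← ENNReal.rpow_neg, neg_neg]]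
      exact ENNReal.inv_le_inv.mpr h'
    -- per-term lower bound
    have hterm : ∀ k : ℕ,
        (K⁻¹ * K⁻¹) * ((k : ℝ≥0∞) + 1) ^ (-(1/2 : ℝ)) ≤
          (∫⁻ x, ENNReal.ofReal ((x i) ^ (2 * (k + 1)))
              ∂(volume.withDensity fun x => ENNReal.ofReal (Real.exp (-p x)))) ^
            (-1 / (2 * ((k : ℝ) + 1))) := by
      intro k
      set e : ℝ := -1 / (2 * ((k : ℝ) + 1)) with he
      have hkpos : (0:ℝ) < (k : ℝ) + 1 := by positivity
      have he0 : e ≤ 0 := by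
        rw [he]
        apply div_nonpos_of_nonpos_of_nonneg <;> [norm_num; positivity]
      have hem : -1 ≤ e := by
        rw [he, neg_div]
        have h12 : 1 / (2 * ((k : ℝ) + 1)) ≤ 1 := by
          rw [div_le_one (by positivity)]
          nlinarith [Nat.cast_nonneg (α := ℝ) k]
        linarith
      have hstep := hanti (hM k) he0
      refine le_trans ?_ hstep
      set L : ℝ≥0∞ := K * ((k+1 : ℕ) : ℝ≥0∞) with hL
      have hLtop : K * ((k+1 : ℕ) : ℝ≥0∞) ≠ ⊤ :=
        ENNReal.mul_ne_top hKtop (ENNReal.natCast_ne_top _)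
      have heq : (K * (K * ((k+1 : ℕ) : ℝ≥0∞)) ^ (k+1)) ^ e =
          K ^ e * ((K * ((k+1 : ℕ) : ℝ≥0∞)) ^ ((k+1 : ℕ) : ℝ)) ^ e := by
        rw [ENNReal.mul_rpow_of_ne_top hKtop (ENNReal.pow_ne_top hLtop),
          ENNReal.rpow_natCast]
      have hme : ((k+1 : ℕ) : ℝ) * e = -(1/2 : ℝ) := by
        push_cast
        rw [he]
        field_simp
      have heq2 : ((K * ((k+1 : ℕ) : ℝ≥0∞)) ^ ((k+1 : ℕ) : ℝ)) ^ e =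
          K ^ (-(1/2 : ℝ)) * (((k+1 : ℕ) : ℝ≥0∞)) ^ (-(1/2 : ℝ)) := by
        rw [← ENNReal.rpow_mul, hme,
          ENNReal.mul_rpow_of_ne_top hKtop (ENNReal.natCast_ne_top _)]
      rw [heq, heq2]
      have hKe : K⁻¹ ≤ K ^ e := by
        rw [← ENNReal.rpow_neg_one]
        exact ENNReal.rpow_le_rpow_of_exponent_le hK1 hem
      have hKh : K⁻¹ ≤ K ^ (-(1/2 : ℝ)) := by
        rw [← ENNReal.rpow_neg_one]
        exact ENNReal.rpow_le_rpow_of_exponent_le hK1 (by norm_num)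
      have hcast : ((k+1 : ℕ) : ℝ≥0∞) = (k : ℝ≥0∞) + 1 := by push_cast; ring
      rw [hcast]
      calc (K⁻¹ * K⁻¹) * ((k : ℝ≥0∞) + 1) ^ (-(1/2 : ℝ))
          = K⁻¹ * (K⁻¹ * ((k : ℝ≥0∞) + 1) ^ (-(1/2 : ℝ))) := by ring
        _ ≤ K ^ e * (K ^ (-(1/2 : ℝ)) * ((k : ℝ≥0∞) + 1) ^ (-(1/2 : ℝ))) :=
            mul_le_mul' hKe (mul_le_mul' hKh le_rfl)
        _ = K ^ e * (K ^ (-(1/2 : ℝ)) * ((k : ℝ≥0∞) + 1) ^ (-(1/2 : ℝ))) := rfl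
    -- conclude
    have hc0 : (K⁻¹ * K⁻¹ : ℝ≥0∞) ≠ 0 :=
      mul_ne_zero (ENNReal.inv_ne_zero.mpr hKtop) (ENNReal.inv_ne_zero.mpr hKtop)
    refine eq_top_iff.mpr ?_
    calc (⊤ : ℝ≥0∞) = (K⁻¹ * K⁻¹) * ∑' k : ℕ, ((k : ℝ≥0∞) + 1) ^ (-(1/2 : ℝ)) := by
          rw [tsum_inv_sqrt_top, ENNReal.mul_top hc0]
      _ = ∑' k : ℕ, (K⁻¹ * K⁻¹) * ((k : ℝ≥0∞) + 1) ^ (-(1/2 : ℝ)) :=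
          (ENNReal.tsum_mul_left).symm
      _ ≤ _ := ENNReal.tsum_le_tsum hterm
end

section
/- Let μ be a finite measure on ℝⁿ such that polynomials lie in L²(μ) and such that the following holds: any h ∈ L²(μ) with ∫ q² h dμ ≥ 0 for all polynomials q satisfies h ≥ 0 μ-a.e. Then the cone Σ of sums of squares of polynomials is dense, in the L²(μ) norm, in the cone P of globally nonnegative polynomials: for every p ∈ P and ε > 0 there exists s ∈ Σ with ‖p − s‖_{L²(μ)} < ε. -/
open MeasureTheory

lemma isSumSq_smul {n : ℕ} {t : ℝ} (ht : 0 ≤ t) {s : MvPolynomial (Fin n) ℝ}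
    (hs : IsSumSq s) : IsSumSq (t • s) := by
  induction hs with
  | zero => simpa using IsSumSq.zero
  | @sq_add a S pS ih =>
    have key : t • (a * a + S)
        = (MvPolynomial.C (Real.sqrt t) * a) * (MvPolynomial.C (Real.sqrt t) * a) + t • S := by
      rw [smul_add, MvPolynomial.smul_eq_C_mul, MvPolynomial.smul_eq_C_mul]
      rw [show (MvPolynomial.C (Real.sqrt t) * a) * (MvPolynomial.C (Real.sqrt t) * a)
          = MvPolynomial.C (Real.sqrt t * Real.sqrt t) * (a * a) by rw [map_mul]; ring]
      rw [Real.mul_self_sqrt ht]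
    rw [key]
    exact IsSumSq.sq_add _ ih

/-- Sums of squares of polynomials are dense, in `L²(μ)` norm, in the cone of globally
nonnegative polynomials, provided polynomials lie in `L²(μ)` and Lasserre's lemma holds
(any `h ∈ L²(μ)` with `∫ q² h dμ ≥ 0` for all polynomials `q` is nonnegative a.e.). -/
theorem sos_dense_in_nonneg (n : ℕ) (μ : Measure (Fin n → ℝ)) [IsFiniteMeasure μ]
    (hpoly : ∀ p : MvPolynomial (Fin n) ℝ, MemLp (fun x => MvPolynomial.eval x p) 2 μ)
    (hlasserre : ∀ h : (Fin n → ℝ) → ℝ, MemLp h 2 μ →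
      (∀ q : MvPolynomial (Fin n) ℝ, 0 ≤ ∫ x, (MvPolynomial.eval x q) ^ 2 * h x ∂μ) →
      0 ≤ᵐ[μ] h)
    (p : MvPolynomial (Fin n) ℝ) (hpnn : ∀ x, 0 ≤ MvPolynomial.eval x p)
    (ε : ℝ) (hε : 0 < ε) :
    ∃ s : MvPolynomial (Fin n) ℝ, IsSumSq s ∧
      eLpNorm (fun x => MvPolynomial.eval x p - MvPolynomial.eval x s) 2 μ <
        ENNReal.ofReal ε := by
  classical
  set E := Lp ℝ 2 μ
  set L : MvPolynomial (Fin n) ℝ → E := fun s => (hpoly s).toLp _ with hL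
  set S : Set E := L '' {s | IsSumSq s} with hS
  -- S is convex
  have hLadd : ∀ s₁ s₂ : MvPolynomial (Fin n) ℝ, L (s₁ + s₂) = L s₁ + L s₂ := by
    intro s₁ s₂
    rw [hL]
    simp only
    rw [← MemLp.toLp_add (hpoly s₁) (hpoly s₂)]
    apply MemLp.toLp_congr
    filter_upwards with x
    simp [Pi.add_apply]
  have hLsmul : ∀ (c : ℝ) (s : MvPolynomial (Fin n) ℝ), L (c • s) = c • L s := by
    intro c s
    rw [hL]
    simp only
    rw [← MemLp.toLp_const_smul c (hpoly s)]
    apply MemLp.toLp_congr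
    filter_upwards with x
    simp [MvPolynomial.smul_eval]
  have hSconv : Convex ℝ S := by
    rintro _ ⟨s₁, hs₁, rfl⟩ _ ⟨s₂, hs₂, rfl⟩ a b ha hb _
    exact ⟨a • s₁ + b • s₂, (isSumSq_smul ha hs₁).add (isSumSq_smul hb hs₂),
      by rw [hLadd, hLsmul, hLsmul]⟩
  by_cases hmem : L p ∈ closure S
  · rw [Metric.mem_closure_iff] at hmem
    obtain ⟨_, ⟨s, hs, rfl⟩, hd⟩ := hmem ε hε
    refine ⟨s, hs, ?_⟩
    have hsub : L p - L s
        = ((hpoly p).sub (hpoly s)).toLp (fun x => MvPolynomial.eval x p - MvPolynomial.eval x s) := by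
      rw [hL]; simp only
      exact (MemLp.toLp_sub (hpoly p) (hpoly s)).symm
    have : dist (L p) (L s) = (eLpNorm (fun x => MvPolynomial.eval x p - MvPolynomial.eval x s) 2 μ).toReal := by
      rw [dist_eq_norm, hsub, Lp.norm_toLp]
    rw [this] at hd
    exact (ENNReal.lt_ofReal_iff_toReal_lt (((hpoly p).sub (hpoly s)).eLpNorm_lt_top).ne).2 hd
  · exfalso
    obtain ⟨f, u, hfp, hfS⟩ :=
      geometric_hahn_banach_point_closed hSconv.closure isClosed_closure hmem
    -- 0 ∈ S, so u < 0
    have h0S : (0 : E) ∈ S := by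
      refine ⟨0, IsSumSq.zero, ?_⟩
      rw [hL]; simp only
      rw [MemLp.toLp_congr (hpoly 0) MemLp.zero (by filter_upwards with x; simp),
        MemLp.toLp_zero]
    have hu0 : u < 0 := by simpa using hfS 0 (subset_closure h0S)
    -- f is nonneg on S
    have hfnn : ∀ b ∈ S, 0 ≤ f b := by
      intro b hb
      by_contra hneg
      push_neg at hneg
      obtain ⟨s, hs, rfl⟩ := hb
      have ht : (0:ℝ) ≤ (u - 1) / f (L s) := by
        exact div_nonneg_iff.2 (Or.inr ⟨by linarith, hneg.le⟩)
      have hmem' : L (((u - 1) / f (L s)) • s) ∈ S :=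
        ⟨_, isSumSq_smul ht hs, rfl⟩
      have := hfS _ (subset_closure hmem')
      rw [hLsmul, ContinuousLinearMap.map_smul, smul_eq_mul,
        div_mul_cancel₀ _ hneg.ne] at this
      linarith
    -- Riesz representation
    obtain ⟨g, hg⟩ := (InnerProductSpace.toDual ℝ E).surjective f
    have hginner : ∀ v : E, f v = inner ℝ g v := by
      intro v; rw [← hg]; rfl
    have hgmem : MemLp (fun x => (g : (Fin n → ℝ) → ℝ) x) 2 μ := Lp.memLp g
    -- inner with L s equals integral
    have hinner_int : ∀ s : MvPolynomial (Fin n) ℝ,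
        (inner ℝ g (L s) : ℝ) = ∫ x, (g : (Fin n → ℝ) → ℝ) x * MvPolynomial.eval x s ∂μ := by
      intro s
      rw [MeasureTheory.L2.inner_def]
      apply integral_congr_ae
      simp only [hL]
      filter_upwards [MemLp.coeFn_toLp (hpoly s)] with x hx
      rw [RCLike.inner_apply', RCLike.conj_to_real, hx]
    -- apply Lasserre
    have hgnn : 0 ≤ᵐ[μ] fun x => (g : (Fin n → ℝ) → ℝ) x := by
      apply hlasserre _ hgmem
      intro q
      have hq2 : IsSumSq (q * q) := by
        simpa using IsSumSq.sq_add q IsSumSq.zero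
      have := hfnn (L (q * q)) ⟨_, hq2, rfl⟩
      rw [hginner, hinner_int] at this
      calc (0:ℝ) ≤ ∫ x, (g : (Fin n → ℝ) → ℝ) x * MvPolynomial.eval x (q * q) ∂μ := this
        _ = ∫ x, (MvPolynomial.eval x q) ^ 2 * (g : (Fin n → ℝ) → ℝ) x ∂μ := by
            apply integral_congr_ae
            filter_upwards with x
            rw [map_mul]; ring
    -- contradiction: f (L p) ≥ 0
    have hfLp : 0 ≤ f (L p) := by
      rw [hginner, hinner_int]
      apply integral_nonneg_of_ae
      filter_upwards [hgnn] with x hx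
      exact mul_nonneg hx (hpnn x)
    linarith
end

section
/- There do not exist sums of squares s₀, s₁, s₂ ∈ ℝ[x] such that x = s₀(x) + s₁(x)·x³ + s₂(x)·(1 − x²) identically. In other words, the polynomial x does not belong to the quadratic module generated by x³ and 1 − x², even though x ≥ 0 on the set K = {x : x³ ≥ 0, 1 − x² ≥ 0} = [0,1]. -/
open Polynomial

lemma issumsq_eval_nonneg (s : Polynomial ℝ) (hs : IsSumSq s) (a : ℝ) :
    0 ≤ s.eval a := by
  induction hs with
  | zero => simp
  | @sq_add p t ht ih =>
    simp only [eval_add, eval_mul]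
    nlinarith [sq_nonneg (p.eval a)]

lemma sos_root_sq_dvd (s : Polynomial ℝ) (hs : IsSumSq s) (h0 : s.eval 0 = 0) :
    (X : Polynomial ℝ) ^ 2 ∣ s := by
  induction hs with
  | zero => simp
  | @sq_add p t ht ih =>
    have hpt : p.eval 0 * p.eval 0 + t.eval 0 = 0 := by simpa using h0
    have htn : 0 ≤ t.eval 0 := issumsq_eval_nonneg t ht 0
    have hp0 : p.eval 0 = 0 := by nlinarith [sq_nonneg (p.eval 0)]
    have ht0 : t.eval 0 = 0 := by nlinarith [sq_nonneg (p.eval 0)]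
    have hXp : (X : Polynomial ℝ) ∣ p := by
      rw [X_dvd_iff, coeff_zero_eq_eval_zero]; exact hp0
    have : (X : Polynomial ℝ) ^ 2 ∣ p * p := by
      rw [pow_two]; exact mul_dvd_mul hXp hXp
    exact dvd_add this (ih ht0)

/-- The polynomial `x` does not belong to the quadratic module generated by `x³` and
`1 − x²`: there are no sums of squares `s₀, s₁, s₂ ∈ ℝ[x]` with
`x = s₀ + s₁·x³ + s₂·(1 − x²)`, even though `x ≥ 0` on `K = [0,1]`. -/
theorem x_not_in_quadratic_module :
    ¬ ∃ s₀ s₁ s₂ : Polynomial ℝ, IsSumSq s₀ ∧ IsSumSq s₁ ∧ IsSumSq s₂ ∧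
      (X : Polynomial ℝ) = s₀ + s₁ * X ^ 3 + s₂ * (1 - X ^ 2) := by
  rintro ⟨s₀, s₁, s₂, h₀, h₁, h₂, heq⟩
  -- evaluate at 0
  have hev : (0 : ℝ) = s₀.eval 0 + s₂.eval 0 := by
    have := congrArg (eval 0) heq
    simpa using this
  have hn0 := issumsq_eval_nonneg s₀ h₀ 0
  have hn2 := issumsq_eval_nonneg s₂ h₂ 0
  have e0 : s₀.eval 0 = 0 := by linarith
  have e2 : s₂.eval 0 = 0 := by linarith
  obtain ⟨a, ha⟩ := sos_root_sq_dvd s₀ h₀ e0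
  obtain ⟨c, hc⟩ := sos_root_sq_dvd s₂ h₂ e2
  -- X² divides the RHS, hence X² ∣ X
  have hdvd : (X : Polynomial ℝ) ^ 2 ∣ (s₀ + s₁ * X ^ 3 + s₂ * (1 - X ^ 2)) := by
    rw [ha, hc]
    exact dvd_add (dvd_add ⟨a, rfl⟩ ⟨s₁ * X, by ring⟩) ⟨c * (1 - X ^ 2), by ring⟩
  rw [← heq] at hdvd
  obtain ⟨q, hq⟩ := hdvd
  have := congrArg (fun p => Polynomial.coeff p 1) hq
  simp only [coeff_X_one] at this
  have h1 : ((X : Polynomial ℝ) ^ 2 * q).coeff 1 = 0 := by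
    rw [pow_two, mul_assoc, coeff_X_mul, mul_coeff_zero]
    simp
  rw [h1] at this
  exact one_ne_zero this
end
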